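/- Let q ≥ 3 and let F ⊆ ∂Δ^q be a union of faces of Δ^q containing F_a ∪ F_{a+1} for some a with 0 < a < q−1, where F_i is the i-th face. Then the quotient X = Δ^q / F is not strongly finite: the internal hom Hom(Δ^1, X) has non-degenerate simplices in every degree p > q, hence is of infinite dimension. -/

import Mathlib

open CategoryTheory Simplicial MonoidalCategory SSet Limits

universe u v

/-- A simplex is degenerate if it is the image of a degeneracy map. -/
def SDeg (X : SSet.{u}) : ∀ {n : ℕ}, X _⦋n⦌ → Prop := fun {n} x => match n, x with
  | 0, _ => False
  | n + 1, x => ∃ (i : Fin (n + 1)) (y : X _⦋n⦌), x = X.map (SimplexCategory.σ i).op y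

/-- The `i`-th elementary edge `X(φ(i,i+1))(x)` of a `p`-simplex `x`. -/
def elemEdge (X : SSet.{u}) {p : ℕ} (x : X _⦋p⦌) (i : Fin p) : X _⦋1⦌ :=
  X.map (SimplexCategory.mkOfLe i.castSucc i.succ (Fin.castSucc_lt_succ (i := i)).le).op x

/-- The internal hom of simplicial sets: its `p`-simplices are the
simplicial maps `Δ[p] ⊗ U ⟶ X`. -/
noncomputable def sHom (U X : SSet.{u}) : SSet.{u} where
  obj m := stdSimplex.obj m.unop ⊗ U ⟶ X
  map φ := TypeCat.ofHom fun f => (SSet.stdSimplex.map φ.unop ▷ U) ≫ f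
  map_id m := by
    ext f : 3; simp
    erw [CategoryTheory.Functor.map_id]; simp
  map_comp φ ψ := by
    ext f : 3; simp
    erw [CategoryTheory.Functor.map_comp]; simp

/-- The quotient of a simplicial set `Y` collapsing a simplicial subset
(given by the sets of simplices `S`) to a point. -/
def collapseQuot (Y : SSet.{u}) (S : ∀ m : SimplexCategoryᵒᵖ, Set (Y.obj m))
    (hS : ∀ {m m' : SimplexCategoryᵒᵖ} (φ : m ⟶ m') (x : Y.obj m),
      x ∈ S m → Y.map φ x ∈ S m') : SSet.{u} where
  obj m := Quot (fun x y : Y.obj m => x ∈ S m ∧ y ∈ S m)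
  map φ := TypeCat.ofHom (Quot.map (Y.map φ) (fun x y h => ⟨hS φ x h.1, hS φ y h.2⟩))
  map_id m := by
    ext x
    obtain ⟨x, rfl⟩ := Quot.exists_rep x
    simp [Quot.map, FunctorToTypes.map_id_apply]
  map_comp φ ψ := by
    ext x
    obtain ⟨x, rfl⟩ := Quot.exists_rep x
    simp [Quot.map, FunctorToTypes.map_comp_apply]

namespace Stmt19

/-- winding map -/
def g (q a N u j : ℕ) : ℕ :=
  if j < u then min j (a-1)
  else if j = u then min u a
  else if j = u+1 then max (a+1) (q + j - (N+1))
  else max (a+2) (q + j - (N+1))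

lemma g_mono {q a N u : ℕ} : Monotone (g q a N u) := by
  intro i j hij; unfold g; split_ifs <;> omega

lemma g_le {q a N u : ℕ} (h2 : a + 2 ≤ q) {j : ℕ} (hj : j ≤ N + 1) : g q a N u j ≤ q := by
  unfold g; split_ifs <;> omega

lemma g_eq_a {q a N u j : ℕ} (h1 : 1 ≤ a) (h : g q a N u j = a) : j = u := by
  unfold g at h; split_ifs at h <;> omega

lemma g_eq_a1 {q a N u j : ℕ} (h : g q a N u j = a + 1) : j = u + 1 := by
  unfold g at h; split_ifs at h <;> omega

lemma g_surj {q a N u : ℕ} (h1 : 1 ≤ a) (h2 : a + 2 ≤ q) (hu : a ≤ u) (hu2 : u + q ≤ N + a + 1)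
    (v : ℕ) (hv : v ≤ q) : ∃ j, j ≤ N + 1 ∧ g q a N u j = v := by
  rcases lt_or_ge v a with h | h
  · exact ⟨v, by omega, by unfold g; split_ifs <;> omega⟩
  rcases eq_or_lt_of_le h with h' | h'
  · exact ⟨u, by omega, by unfold g; split_ifs <;> omega⟩
  rcases eq_or_lt_of_le (Nat.succ_le_of_lt h') with h'' | h''
  · exact ⟨u+1, by omega, by unfold g; split_ifs <;> omega⟩
  · exact ⟨N+1+v-q, by omega, by unfold g; split_ifs <;> omega⟩

lemma quot_eq_cases {α : Type*} {S : Set α} {x y : α}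
    (h : Quot.mk (fun x y : α => x ∈ S ∧ y ∈ S) x = Quot.mk _ y) :
    x = y ∨ (x ∈ S ∧ y ∈ S) := by
  have h' := Quot.eq.mp h
  clear h
  induction h' with
  | rel _ _ hr => exact Or.inr hr
  | refl => exact Or.inl rfl
  | symm a b _ ih => rcases ih with h | h; exacts [Or.inl h.symm, Or.inr ⟨h.2, h.1⟩]
  | trans a b c _ _ ih1 ih2 =>
      rcases ih1 with h | h
      · rcases ih2 with h' | h'; exacts [Or.inl (h.trans h'), Or.inr ⟨h ▸ h'.1, h'.2⟩]
      · rcases ih2 with h' | h'; exacts [Or.inr ⟨h.1, h' ▸ h.2⟩, Or.inr ⟨h.1, h'.2⟩]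


/-- a simplex of `Δ[q]` from an order hom -/
def mkSimplex (q : ℕ) (m : SimplexCategoryᵒᵖ) (o : Fin (m.unop.len+1) →o Fin (q+1)) :
    (stdSimplex.{u}.obj ⦋q⦌).obj m :=
  (stdSimplex.objEquiv (n := ⦋q⦌) (m := m)).symm (SimplexCategory.Hom.mk o)

lemma mkSimplex_toOrderHom (q : ℕ) (m : SimplexCategoryᵒᵖ) (o : Fin (m.unop.len+1) →o Fin (q+1)) :
    (stdSimplex.objEquiv (n := ⦋q⦌) (m := m) (mkSimplex.{u} q m o)).toOrderHom = o := by
  simp [mkSimplex]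

lemma mkSimplex_map (q : ℕ) {m m' : SimplexCategoryᵒᵖ} (φ : m ⟶ m')
    (o : Fin (m.unop.len+1) →o Fin (q+1)) :
    (stdSimplex.{u}.obj ⦋q⦌).map φ (mkSimplex.{u} q m o) =
      mkSimplex.{u} q m' (o.comp φ.unop.toOrderHom) := rfl

lemma mkSimplex_surj (q : ℕ) (m : SimplexCategoryᵒᵖ) (x : (stdSimplex.{u}.obj ⦋q⦌).obj m) :
    mkSimplex.{u} q m (stdSimplex.objEquiv (n := ⦋q⦌) (m := m) x).toOrderHom = x := by
  simp [mkSimplex]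

/-- the winding order-hom -/
def gfin (q a N : ℕ) (h2 : a + 2 ≤ q) (u : ℕ) {l : ℕ} (ψ : Fin (l+1) →o Fin (N+2)) :
    Fin (l+1) →o Fin (q+1) :=
  ⟨fun j => ⟨g q a N u (ψ j), by
      have h := (ψ j).is_lt
      exact Nat.lt_succ_of_le (g_le (u := u) h2 (j := (ψ j : ℕ)) (by omega))⟩,
   fun i j hij => by
      simp only [Fin.mk_le_mk]
      exact g_mono (ψ.monotone hij)⟩

variable {N : ℕ} {m : SimplexCategoryᵒᵖ}

def Aof (N : ℕ) (m : SimplexCategoryᵒᵖ)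
    (x : (stdSimplex.{u}.obj ⦋N⦌ ⊗ stdSimplex.{u}.obj ⦋1⦌).obj m) :
    Fin (m.unop.len+1) →o Fin (N+1) := (stdSimplex.objEquiv (n := ⦋N⦌) (m := m) x.1).toOrderHom

def Bof (N : ℕ) (m : SimplexCategoryᵒᵖ)
    (x : (stdSimplex.{u}.obj ⦋N⦌ ⊗ stdSimplex.{u}.obj ⦋1⦌).obj m) :
    Fin (m.unop.len+1) →o Fin 2 := (stdSimplex.objEquiv (n := ⦋1⦌) (m := m) x.2).toOrderHom

def Uof (N : ℕ) (m : SimplexCategoryᵒᵖ)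
    (x : (stdSimplex.{u}.obj ⦋N⦌ ⊗ stdSimplex.{u}.obj ⦋1⦌).obj m) : ℕ :=
  Finset.univ.sup fun j => if (Bof N m x j : ℕ) = 0 then (Aof N m x j : ℕ) else 0

def psiOf (N : ℕ) (m : SimplexCategoryᵒᵖ)
    (x : (stdSimplex.{u}.obj ⦋N⦌ ⊗ stdSimplex.{u}.obj ⦋1⦌).obj m) :
    Fin (m.unop.len+1) →o Fin (N+2) :=
  ⟨fun j => ⟨(Aof N m x j : ℕ) + (Bof N m x j : ℕ), by
      have := (Aof N m x j).is_lt; have := (Bof N m x j).is_lt; omega⟩,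
   fun i j hij => by
      simp only [Fin.mk_le_mk]
      have := (Aof N m x).monotone hij
      have := (Bof N m x).monotone hij
      simp only [Fin.le_def] at *
      omega⟩

lemma Aof_map {m m' : SimplexCategoryᵒᵖ} (φ : m ⟶ m')
    (x : (stdSimplex.{u}.obj ⦋N⦌ ⊗ stdSimplex.{u}.obj ⦋1⦌).obj m) (j) :
    Aof N m' ((stdSimplex.{u}.obj ⦋N⦌ ⊗ stdSimplex.{u}.obj ⦋1⦌).map φ x) j
      = Aof N m x (φ.unop.toOrderHom j) := rfl

lemma Bof_map {m m' : SimplexCategoryᵒᵖ} (φ : m ⟶ m')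
    (x : (stdSimplex.{u}.obj ⦋N⦌ ⊗ stdSimplex.{u}.obj ⦋1⦌).obj m) (j) :
    Bof N m' ((stdSimplex.{u}.obj ⦋N⦌ ⊗ stdSimplex.{u}.obj ⦋1⦌).map φ x) j
      = Bof N m x (φ.unop.toOrderHom j) := rfl

lemma valid_le (x : (stdSimplex.{u}.obj ⦋N⦌ ⊗ stdSimplex.{u}.obj ⦋1⦌).obj m)
    (j) (hj : (Bof N m x j : ℕ) = 0) : (Aof N m x j : ℕ) ≤ Uof N m x := by
  have := Finset.le_sup (f := fun j => if (Bof N m x j : ℕ) = 0 then (Aof N m x j : ℕ) else 0)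
    (Finset.mem_univ j)
  rw [if_pos hj] at this
  exact this

lemma valid_ge (x : (stdSimplex.{u}.obj ⦋N⦌ ⊗ stdSimplex.{u}.obj ⦋1⦌).obj m)
    (j) (hj : (Bof N m x j : ℕ) = 1) : Uof N m x ≤ (Aof N m x j : ℕ) := by
  apply Finset.sup_le
  intro j' _
  split_ifs with h0
  · have hle : j' ≤ j := by
      by_contra hlt
      have := (Bof N m x).monotone (le_of_not_ge hlt)
      simp only [Fin.le_def] at this
      omega
    exact (Aof N m x).monotone hle
  · omega

theorem predAbove_coe {n : ℕ} (k : Fin n) (j : Fin (n+1)) :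
    ((k.predAbove j : Fin n) : ℕ) = if (k:ℕ) < (j:ℕ) then (j:ℕ) - 1 else (j:ℕ) := by
  rcases lt_or_ge (k.castSucc) j with h | h
  · have hlt : (k:ℕ) < j := by simpa [Fin.lt_def] using h
    rw [Fin.predAbove_of_castSucc_lt _ _ h, Fin.coe_pred, if_pos hlt]
  · have hle : ¬ (k:ℕ) < j := by simp [Fin.le_def] at h; omega
    rw [Fin.predAbove_of_le_castSucc _ _ h, Fin.coe_castPred, if_neg hle]

def aOH (p w : ℕ) (hw : w ≤ p + 1) : Fin (p+3) →o Fin (p+2) :=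
  ⟨fun j => ⟨if (j:ℕ) ≤ w then (j:ℕ) else (j:ℕ) - 1, by have := j.is_lt; split_ifs <;> omega⟩,
   fun i j hij => by
     have h : (i:ℕ) ≤ (j:ℕ) := hij
     simp only [Fin.mk_le_mk]; split_ifs <;> omega⟩

lemma aOH_val (p w : ℕ) (hw : w ≤ p+1) (j : Fin (p+3)) :
    ((aOH p w hw) j : ℕ) = if (j:ℕ) ≤ w then (j:ℕ) else (j:ℕ) - 1 := rfl

def aOH' (p w K : ℕ) (hw : w ≤ p + 1) (hK : K ≤ p) : Fin (p+3) →o Fin (p+2) :=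
  ⟨fun j => ⟨if (if (j:ℕ) ≤ w then (j:ℕ) else (j:ℕ)-1) = K+1 then K
      else (if (j:ℕ) ≤ w then (j:ℕ) else (j:ℕ)-1), by
        have := j.is_lt; split_ifs <;> omega⟩,
   fun i j hij => by
     have h : (i:ℕ) ≤ (j:ℕ) := hij
     simp only [Fin.mk_le_mk]; split_ifs <;> omega⟩

lemma aOH'_val (p w K : ℕ) (hw : w ≤ p + 1) (hK : K ≤ p) (j : Fin (p+3)) :
    ((aOH' p w K hw hK) j : ℕ) = if (if (j:ℕ) ≤ w then (j:ℕ) else (j:ℕ)-1) = K+1 then K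
      else (if (j:ℕ) ≤ w then (j:ℕ) else (j:ℕ)-1) := rfl

def bOH (p w : ℕ) : Fin (p+3) →o Fin 2 :=
  ⟨fun j => ⟨if (j:ℕ) ≤ w then 0 else 1, by split_ifs <;> omega⟩,
   fun i j hij => by
     have h : (i:ℕ) ≤ (j:ℕ) := hij
     simp only [Fin.mk_le_mk]; split_ifs <;> omega⟩

lemma bOH_val (p w : ℕ) (j : Fin (p+3)) :
    ((bOH p w) j : ℕ) = if (j:ℕ) ≤ w then 0 else 1 := rfl


end Stmt19

open Stmt19 in
/-- If `q ≥ 3` and `F ⊆ ∂Δ[q]` is a union of the faces `F_i`, `i ∈ T`, containing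
`F_a ∪ F_{a+1}` with `0 < a < q - 1`, then `Hom(Δ[1], Δ[q]/F)` has non-degenerate
simplices in every degree `> q`, hence `Δ[q]/F` is not strongly finite. -/
theorem stmt_19 (q a : ℕ) (hq : 3 ≤ q) (ha : 0 < a) (ha' : a < q - 1)
    (T : Set (Fin (q + 1)))
    (haT : (⟨a, by omega⟩ : Fin (q + 1)) ∈ T) (haT' : (⟨a + 1, by omega⟩ : Fin (q + 1)) ∈ T)
    (S : ∀ m : SimplexCategoryᵒᵖ, Set ((stdSimplex.{u}.obj ⦋q⦌).obj m))
    (hSdef : ∀ (m : SimplexCategoryᵒᵖ) (x : (stdSimplex.{u}.obj ⦋q⦌).obj m),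
      x ∈ S m ↔ ∃ i ∈ T, ∀ j, (stdSimplex.objEquiv (n := ⦋q⦌) (m := m) x).toOrderHom j ≠ i)
    (hS : ∀ {m m' : SimplexCategoryᵒᵖ} (φ : m ⟶ m')
      (x : (stdSimplex.{u}.obj ⦋q⦌).obj m),
      x ∈ S m → (stdSimplex.{u}.obj ⦋q⦌).map φ x ∈ S m') :
    ∀ p : ℕ, q < p + 1 →
      ∃ f : (sHom (stdSimplex.{u}.obj ⦋1⦌)
          (collapseQuot (stdSimplex.{u}.obj ⦋q⦌) S hS)) _⦋p + 1⦌,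
        ¬ SDeg (sHom (stdSimplex.{u}.obj ⦋1⦌)
            (collapseQuot (stdSimplex.{u}.obj ⦋q⦌) S hS)) f := by
  intro p hp
  have h1 : 1 ≤ a := ha
  have h2 : a + 2 ≤ q := by omega
  have hNq : q ≤ p := by omega
  -- `mkSimplex (gfin u ψ)` is in S when ψ avoids u (misses the value a)
  have missA : ∀ (m : SimplexCategoryᵒᵖ) (u : ℕ) (ψ : Fin (m.unop.len+1) →o Fin (p+3)),
      (∀ j, (ψ j : ℕ) ≠ u) → mkSimplex.{u} q m (gfin q a (p+1) h2 u ψ) ∈ S m := by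
    intro m u ψ hψ
    rw [hSdef]
    refine ⟨⟨a, by omega⟩, haT, fun j => ?_⟩
    rw [mkSimplex_toOrderHom]
    intro hcon
    have hval : g q a (p+1) u (ψ j) = a := congrArg Fin.val hcon
    exact hψ j (g_eq_a h1 hval)
  have missA1 : ∀ (m : SimplexCategoryᵒᵖ) (u : ℕ) (ψ : Fin (m.unop.len+1) →o Fin (p+3)),
      (∀ j, (ψ j : ℕ) ≠ u + 1) → mkSimplex.{u} q m (gfin q a (p+1) h2 u ψ) ∈ S m := by
    intro m u ψ hψ
    rw [hSdef]
    refine ⟨⟨a+1, by omega⟩, haT', fun j => ?_⟩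
    rw [mkSimplex_toOrderHom]
    intro hcon
    have hval : g q a (p+1) u (ψ j) = a + 1 := congrArg Fin.val hcon
    exact hψ j (g_eq_a1 hval)
  -- well-definedness: changing a compatible sector gives the same class
  have WD : ∀ (m : SimplexCategoryᵒᵖ) (ψ : Fin (m.unop.len+1) →o Fin (p+3)) (u u' : ℕ),
      (∀ j, ((ψ j : ℕ) ≤ u ∧ (ψ j : ℕ) ≤ u') ∨ (u < (ψ j : ℕ) ∧ u' < (ψ j : ℕ))) →
      Quot.mk (fun x y => x ∈ S m ∧ y ∈ S m) (mkSimplex.{u} q m (gfin q a (p+1) h2 u ψ))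
        = Quot.mk _ (mkSimplex.{u} q m (gfin q a (p+1) h2 u' ψ)) := by
    intro m ψ u u' hval
    rcases Nat.lt_trichotomy u u' with h | h | h
    · exact Quot.sound ⟨missA1 m u ψ (fun j => by rcases hval j with h' | h' <;> omega),
        missA m u' ψ (fun j => by rcases hval j with h' | h' <;> omega)⟩
    · rw [h]
    · exact Quot.sound ⟨missA m u ψ (fun j => by rcases hval j with h' | h' <;> omega),
        missA1 m u' ψ (fun j => by rcases hval j with h' | h' <;> omega)⟩
  refine ⟨⟨fun m => TypeCat.ofHom fun x =>
      Quot.mk _ (mkSimplex.{u} q m (gfin q a (p+1) h2 (Uof (p+1) m x) (psiOf (p+1) m x))), ?_⟩, ?_⟩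
  · intro m m' φ
    ext x
    show Quot.mk _ (mkSimplex.{u} q m' (gfin q a (p+1) h2
        (Uof (p+1) m' ((stdSimplex.{u}.obj ⦋p+1⦌ ⊗ stdSimplex.{u}.obj ⦋1⦌).map φ x))
        ((psiOf (p+1) m x).comp φ.unop.toOrderHom)))
      = Quot.mk _ (mkSimplex.{u} q m' (gfin q a (p+1) h2 (Uof (p+1) m x)
        ((psiOf (p+1) m x).comp φ.unop.toOrderHom)))
    apply WD
    intro j
    have hb := (Bof (p+1) m x (φ.unop.toOrderHom j)).is_lt
    have hψval : (((psiOf (p+1) m x).comp φ.unop.toOrderHom) j : ℕ)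
        = (Aof (p+1) m x (φ.unop.toOrderHom j) : ℕ) + (Bof (p+1) m x (φ.unop.toOrderHom j) : ℕ) :=
      rfl
    rcases (by omega : (Bof (p+1) m x (φ.unop.toOrderHom j) : ℕ) = 0 ∨ (Bof (p+1) m x (φ.unop.toOrderHom j) : ℕ) = 1) with h0 | h01
    · left
      constructor
      · rw [hψval, h0]
        have := valid_le (N := p+1) ((stdSimplex.{u}.obj ⦋p+1⦌ ⊗ stdSimplex.{u}.obj ⦋1⦌).map φ x)
          j (by rw [Bof_map]; exact h0)
        rw [Aof_map] at this
        omega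
      · rw [hψval, h0]
        have := valid_le (N := p+1) x (φ.unop.toOrderHom j) h0
        omega
    · right
      constructor
      · have := valid_ge (N := p+1) ((stdSimplex.{u}.obj ⦋p+1⦌ ⊗ stdSimplex.{u}.obj ⦋1⦌).map φ x)
          j (by rw [Bof_map]; exact h01)
        rw [Aof_map] at this
        rw [hψval, h01]
        omega
      · have := valid_ge (N := p+1) x (φ.unop.toOrderHom j) h01
        rw [hψval, h01]
        omega
  · -- non-degeneracy
    intro hdeg
    obtain ⟨k, y, hy⟩ := hdeg
    have hK : (k:ℕ) ≤ p := Nat.lt_succ_iff.mp k.is_lt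
    set K : ℕ := (k : ℕ) with hKdef
    set m₀ : SimplexCategoryᵒᵖ := Opposite.op (⦋p+2⦌ : SimplexCategory) with hm₀def
    -- the degeneracy equation, applied to an arbitrary simplex of the prism
    have hy' : ∀ z : (stdSimplex.{u}.obj ⦋p+1⦌ ⊗ stdSimplex.{u}.obj ⦋1⦌).obj m₀,
        Quot.mk (fun c d => c ∈ S m₀ ∧ d ∈ S m₀)
          (mkSimplex.{u} q m₀ (gfin q a (p+1) h2 (Uof (p+1) m₀ z) (psiOf (p+1) m₀ z)))
        = y.app m₀ ((SSet.stdSimplex.map (SimplexCategory.σ k)).app m₀ z.1, z.2) := by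
      intro z
      exact congrArg (fun t : (stdSimplex.{u}.obj ⦋p+1⦌ ⊗ stdSimplex.{u}.obj ⦋1⦌ ⟶
        collapseQuot (stdSimplex.{u}.obj ⦋q⦌) S hS) => t.app m₀ z) hy
    -- replacing the canonical sector by any valid sector
    have sector : ∀ (z : (stdSimplex.{u}.obj ⦋p+1⦌ ⊗ stdSimplex.{u}.obj ⦋1⦌).obj m₀)
        (v : ℕ),
        (∀ j, (Bof (p+1) m₀ z j : ℕ) = 0 → (Aof (p+1) m₀ z j : ℕ) ≤ v) →
        (∀ j, (Bof (p+1) m₀ z j : ℕ) = 1 → v ≤ (Aof (p+1) m₀ z j : ℕ)) →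
        Quot.mk (fun c d => c ∈ S m₀ ∧ d ∈ S m₀)
          (mkSimplex.{u} q m₀ (gfin q a (p+1) h2 (Uof (p+1) m₀ z) (psiOf (p+1) m₀ z)))
        = Quot.mk _ (mkSimplex.{u} q m₀ (gfin q a (p+1) h2 v (psiOf (p+1) m₀ z))) := by
      intro z v hv0 hv1
      apply WD
      intro j
      have hb : (Bof (p+1) m₀ z j : ℕ) = 0 ∨ (Bof (p+1) m₀ z j : ℕ) = 1 := by
        have := (Bof (p+1) m₀ z j).is_lt; omega
      have hψval : ((psiOf (p+1) m₀ z) j : ℕ)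
          = (Aof (p+1) m₀ z j : ℕ) + (Bof (p+1) m₀ z j : ℕ) := rfl
      rcases hb with h0 | h01
      · left
        have h3 := valid_le (N := p+1) z j h0
        have h4 := hv0 j h0
        rw [hψval, h0]
        omega
      · right
        have h3 := valid_ge (N := p+1) z j h01
        have h4 := hv1 j h01
        rw [hψval, h01]
        omega
    -- the main argument, for a generic pair of sectors and a distinguishing position
    have main : ∀ (w w' j₀ : ℕ), j₀ ≤ p + 2 → a ≤ w → w + q ≤ p + a + 2 →
        ∀ (hwle : w ≤ p + 1),
        (∀ j : Fin (p+3), ((bOH p w) j : ℕ) = 0 → ((aOH' p w K hwle hK) j : ℕ) ≤ w') →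
        (∀ j : Fin (p+3), ((bOH p w) j : ℕ) = 1 → w' ≤ ((aOH' p w K hwle hK) j : ℕ)) →
        (g q a (p+1) w j₀ ≠ g q a (p+1) w'
          ((if (if j₀ ≤ w then j₀ else j₀-1) = K+1 then K else (if j₀ ≤ w then j₀ else j₀-1))
            + (if j₀ ≤ w then 0 else 1))) → False := by
      intro w w' j₀ hj₀ hwa hwq hwle hv0' hv1' hneq
      set x : (stdSimplex.{u}.obj ⦋p+1⦌ ⊗ stdSimplex.{u}.obj ⦋1⦌).obj m₀ :=
        (mkSimplex.{u} (p+1) m₀ (aOH p w hwle), mkSimplex.{u} 1 m₀ (bOH p w)) with hxdef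
      set x' : (stdSimplex.{u}.obj ⦋p+1⦌ ⊗ stdSimplex.{u}.obj ⦋1⦌).obj m₀ :=
        (mkSimplex.{u} (p+1) m₀ (aOH' p w K hwle hK), mkSimplex.{u} 1 m₀ (bOH p w)) with hx'def
      have hAx : Aof (p+1) m₀ x = aOH p w hwle := mkSimplex_toOrderHom (p+1) m₀ _
      have hBx : Bof (p+1) m₀ x = bOH p w := mkSimplex_toOrderHom 1 m₀ _
      have hAx' : Aof (p+1) m₀ x' = aOH' p w K hwle hK := mkSimplex_toOrderHom (p+1) m₀ _
      have hBx' : Bof (p+1) m₀ x' = bOH p w := mkSimplex_toOrderHom 1 m₀ _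
      have hψx : ∀ j : Fin (p+3), ((psiOf (p+1) m₀ x) j : ℕ) = (j : ℕ) := by
        intro j
        show ((Aof (p+1) m₀ x) j : ℕ) + ((Bof (p+1) m₀ x) j : ℕ) = (j : ℕ)
        rw [hAx, hBx]
        show (if (j:ℕ) ≤ w then (j:ℕ) else (j:ℕ)-1) + (if (j:ℕ) ≤ w then (0:ℕ) else 1) = (j : ℕ)
        split_ifs <;> omega
      have hψx' : ∀ j : Fin (p+3), ((psiOf (p+1) m₀ x') j : ℕ)
          = (if (if (j:ℕ) ≤ w then (j:ℕ) else (j:ℕ)-1) = K+1 then K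
              else (if (j:ℕ) ≤ w then (j:ℕ) else (j:ℕ)-1)) + (if (j:ℕ) ≤ w then 0 else 1) := by
        intro j
        show ((Aof (p+1) m₀ x') j : ℕ) + ((Bof (p+1) m₀ x') j : ℕ) = _
        rw [hAx', hBx']
        rfl
      -- the two inputs are identified by σ k
      have hσ : (SimplexCategory.Hom.mk (aOH p w hwle) :
            (Opposite.unop m₀) ⟶ ⦋p+1⦌) ≫ SimplexCategory.σ k
          = (SimplexCategory.Hom.mk (aOH' p w K hwle hK) :
            (Opposite.unop m₀) ⟶ ⦋p+1⦌) ≫ SimplexCategory.σ k := by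
        refine SimplexCategory.Hom.ext _ _ (OrderHom.ext _ _ (funext fun j => Fin.ext ?_))
        show ((k.predAbove ((aOH p w hwle) j)) : ℕ) = ((k.predAbove ((aOH' p w K hwle hK) j)) : ℕ)
        rw [predAbove_coe, predAbove_coe]
        show (if (k:ℕ) < (if (j:ℕ) ≤ w then (j:ℕ) else (j:ℕ)-1)
            then (if (j:ℕ) ≤ w then (j:ℕ) else (j:ℕ)-1) - 1
            else (if (j:ℕ) ≤ w then (j:ℕ) else (j:ℕ)-1))
          = (if (k:ℕ) < (if (if (j:ℕ) ≤ w then (j:ℕ) else (j:ℕ)-1) = K+1 then K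
                else (if (j:ℕ) ≤ w then (j:ℕ) else (j:ℕ)-1))
            then (if (if (j:ℕ) ≤ w then (j:ℕ) else (j:ℕ)-1) = K+1 then K
                else (if (j:ℕ) ≤ w then (j:ℕ) else (j:ℕ)-1)) - 1
            else (if (if (j:ℕ) ≤ w then (j:ℕ) else (j:ℕ)-1) = K+1 then K
                else (if (j:ℕ) ≤ w then (j:ℕ) else (j:ℕ)-1)))
        split_ifs <;> omega
      have hσ' : (SSet.stdSimplex.map (SimplexCategory.σ k)).app m₀ x.1
          = (SSet.stdSimplex.map (SimplexCategory.σ k)).app m₀ x'.1 :=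
        congrArg (fun h => (stdSimplex.objEquiv (n := ⦋p⦌) (m := m₀)).symm h) hσ
      have hfxfx' : Quot.mk (fun c d => c ∈ S m₀ ∧ d ∈ S m₀)
          (mkSimplex.{u} q m₀ (gfin q a (p+1) h2 (Uof (p+1) m₀ x) (psiOf (p+1) m₀ x)))
          = Quot.mk _
          (mkSimplex.{u} q m₀ (gfin q a (p+1) h2 (Uof (p+1) m₀ x') (psiOf (p+1) m₀ x'))) := by
        rw [hy' x, hy' x']
        exact congrArg (fun z => y.app m₀ (z, x.2)) hσ'
      have hv0w : ∀ j, (Bof (p+1) m₀ x j : ℕ) = 0 → (Aof (p+1) m₀ x j : ℕ) ≤ w := by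
        intro j hb
        rw [hBx] at hb
        rw [hAx]
        revert hb
        show ((if (j:ℕ) ≤ w then (0:ℕ) else 1) = 0) →
          ((if (j:ℕ) ≤ w then (j:ℕ) else (j:ℕ)-1) ≤ w)
        intro hb
        split_ifs at hb ⊢ <;> omega
      have hv1w : ∀ j, (Bof (p+1) m₀ x j : ℕ) = 1 → w ≤ (Aof (p+1) m₀ x j : ℕ) := by
        intro j hb
        rw [hBx] at hb
        rw [hAx]
        revert hb
        show ((if (j:ℕ) ≤ w then (0:ℕ) else 1) = 1) →
          (w ≤ (if (j:ℕ) ≤ w then (j:ℕ) else (j:ℕ)-1))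
        intro hb
        split_ifs at hb ⊢ <;> omega
      have hv0x' : ∀ j, (Bof (p+1) m₀ x' j : ℕ) = 0 → (Aof (p+1) m₀ x' j : ℕ) ≤ w' := by
        intro j hb
        rw [hBx'] at hb; rw [hAx']
        exact hv0' j hb
      have hv1x' : ∀ j, (Bof (p+1) m₀ x' j : ℕ) = 1 → w' ≤ (Aof (p+1) m₀ x' j : ℕ) := by
        intro j hb
        rw [hBx'] at hb; rw [hAx']
        exact hv1' j hb
      have hclass : Quot.mk (fun c d => c ∈ S m₀ ∧ d ∈ S m₀)
          (mkSimplex.{u} q m₀ (gfin q a (p+1) h2 w (psiOf (p+1) m₀ x)))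
          = Quot.mk _ (mkSimplex.{u} q m₀ (gfin q a (p+1) h2 w' (psiOf (p+1) m₀ x'))) :=
        (sector x w hv0w hv1w).symm.trans (hfxfx'.trans (sector x' w' hv0x' hv1x'))
      have notMem : mkSimplex.{u} q m₀ (gfin q a (p+1) h2 w (psiOf (p+1) m₀ x)) ∉ S m₀ := by
        rw [hSdef]
        rintro ⟨i, hiT, hmiss⟩
        obtain ⟨jn, hjn, hgj⟩ := g_surj (N := p+1) h1 h2 hwa (by omega) (i:ℕ) (by have := i.is_lt; omega)
        have hjn3 : jn < p + 3 := by omega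
        refine hmiss ⟨jn, hjn3⟩ ?_
        rw [mkSimplex_toOrderHom]
        apply Fin.ext
        show g q a (p+1) w ((psiOf (p+1) m₀ x ⟨jn, hjn3⟩ : ℕ)) = (i:ℕ)
        rw [hψx ⟨jn, hjn3⟩]
        exact hgj
      rcases quot_eq_cases hclass with hMeq | hSS
      · have hj₀3 : j₀ < p + 3 := by omega
        have hval := congrArg
          (fun z => (((stdSimplex.objEquiv (n := ⦋q⦌) (m := m₀)) z).toOrderHom ⟨j₀, hj₀3⟩ : ℕ)) hMeq
        simp only [mkSimplex_toOrderHom] at hval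
        have hval2 : g q a (p+1) w ((psiOf (p+1) m₀ x ⟨j₀, hj₀3⟩ : ℕ))
            = g q a (p+1) w' ((psiOf (p+1) m₀ x' ⟨j₀, hj₀3⟩ : ℕ)) := hval
        rw [hψx ⟨j₀, hj₀3⟩, hψx' ⟨j₀, hj₀3⟩] at hval2
        exact hneq hval2
      · exact notMem hSS.1
    -- the three regimes for k
    rcases le_or_gt (K+2) a with hc | hc
    · refine main a a (K+1) (by omega) (le_rfl) (by omega) (by omega) ?_ ?_ ?_
      · intro j hb
        rw [bOH_val] at hb; rw [aOH'_val]
        split_ifs at hb ⊢ <;> omega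
      · intro j hb
        rw [bOH_val] at hb; rw [aOH'_val]
        split_ifs at hb ⊢ <;> omega
      · have harg : ((if (if K+1 ≤ a then K+1 else K+1-1) = K+1 then K
            else (if K+1 ≤ a then K+1 else K+1-1)) + (if K+1 ≤ a then (0:ℕ) else 1)) = K := by
          split_ifs <;> omega
        rw [harg]
        unfold g; split_ifs <;> omega
    · rcases le_or_gt K (p+1+a-q) with hc2 | hc2
      · refine main (K+1) K (if a ≤ K then K else K+1) (by split_ifs <;> omega) (by omega)
          (by omega) (by omega) ?_ ?_ ?_
        · intro j hb
          rw [bOH_val] at hb; rw [aOH'_val]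
          split_ifs at hb ⊢ <;> omega
        · intro j hb
          rw [bOH_val] at hb; rw [aOH'_val]
          split_ifs at hb ⊢ <;> omega
        · have harg : ((if (if (if a ≤ K then K else K+1) ≤ K+1 then (if a ≤ K then K else K+1)
              else (if a ≤ K then K else K+1)-1) = K+1 then K
              else (if (if a ≤ K then K else K+1) ≤ K+1 then (if a ≤ K then K else K+1)
                else (if a ≤ K then K else K+1)-1))
              + (if (if a ≤ K then K else K+1) ≤ K+1 then (0:ℕ) else 1)) = K := by
            split_ifs <;> omega
          rw [harg]
          unfold g; split_ifs <;> omega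
      · refine main (p+2+a-q) (p+2+a-q) (K+2) (by omega) (by omega) (by omega) (by omega)
          ?_ ?_ ?_
        · intro j hb
          rw [bOH_val] at hb; rw [aOH'_val]
          split_ifs at hb ⊢ <;> omega
        · intro j hb
          rw [bOH_val] at hb; rw [aOH'_val]
          split_ifs at hb ⊢ <;> omega
        · have harg : ((if (if K+2 ≤ p+2+a-q then K+2 else K+2-1) = K+1 then K
              else (if K+2 ≤ p+2+a-q then K+2 else K+2-1))
              + (if K+2 ≤ p+2+a-q then (0:ℕ) else 1)) = K+1 := by
            split_ifs <;> omega
          rw [harg]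
          unfold g; split_ifs <;> omega
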